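/- Let h > 0 and Θ : ℤ → ℝ, and define Tₙ = (cos Θₙ, sin Θₙ) ∈ ℝ² and κₙ = (2/h) tan((Θₙ − Θₙ₋₁)/2). Assume cos((Θₙ − Θₙ₋₁)/2) ≠ 0 and 1 + ⟨Tₙ₋₁, Tₙ⟩ ≠ 0 for all n. Suppose there exist a ∈ ℝ² and c : ℤ → ℝ such that for all n, (2/h)·Tₙ₋₁/(1 + ⟨Tₙ₋₁, Tₙ⟩) + (2/h)·Tₙ₊₁/(1 + ⟨Tₙ, Tₙ₊₁⟩) + 2cₙ Tₙ + h a = 0. Then there exists α ∈ ℝ such that for all n, (κₙ₊₁ + κₙ₋₁)(1 + (h²/4)κₙ²) = α κₙ. -/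

import Mathlib

lemma Dhalf (x y : ℝ) : 1 + (Real.cos x * Real.cos y + Real.sin x * Real.sin y) = 2 * Real.cos ((y-x)/2)^2 := by
  have h1 := Real.cos_sq ((y-x)/2)
  rw [show 2*((y-x)/2) = y-x by ring, Real.cos_sub] at h1
  linarith

lemma EL_normal (h a1 a2 cn x y z : ℝ) (hh : h ≠ 0)
    (hc1 : Real.cos ((y-x)/2) ≠ 0) (hc2 : Real.cos ((z-y)/2) ≠ 0)
    (e1 : 2/h/(1+(Real.cos x*Real.cos y+Real.sin x*Real.sin y)) * Real.cos x
        + 2/h/(1+(Real.cos y*Real.cos z+Real.sin y*Real.sin z)) * Real.cos z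
        + 2*cn*Real.cos y + h*a1 = 0)
    (e2 : 2/h/(1+(Real.cos x*Real.cos y+Real.sin x*Real.sin y)) * Real.sin x
        + 2/h/(1+(Real.cos y*Real.cos z+Real.sin y*Real.sin z)) * Real.sin z
        + 2*cn*Real.sin y + h*a2 = 0) :
    Real.tan ((z-y)/2) - Real.tan ((y-x)/2) = h^2/2 * (a1*Real.sin y - a2*Real.cos y) := by
  rw [Dhalf x y, Dhalf y z] at e1 e2
  have s1 : Real.sin y * Real.cos x - Real.cos y * Real.sin x = 2 * Real.sin ((y-x)/2) * Real.cos ((y-x)/2) := by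
    have h1 := Real.sin_two_mul ((y-x)/2)
    rw [show 2*((y-x)/2) = y-x by ring, Real.sin_sub] at h1; linarith
  have s2 : Real.sin z * Real.cos y - Real.cos z * Real.sin y = 2 * Real.sin ((z-y)/2) * Real.cos ((z-y)/2) := by
    have h1 := Real.sin_two_mul ((z-y)/2)
    rw [show 2*((z-y)/2) = z-y by ring, Real.sin_sub] at h1; linarith
  rw [Real.tan_eq_sin_div_cos, Real.tan_eq_sin_div_cos]
  linear_combination (norm := skip) (h/2)*(-(Real.sin y)*e1 + Real.cos y*e2) + s1/(2*Real.cos ((y-x)/2)^2) - s2/(2*Real.cos ((z-y)/2)^2)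
  field_simp
  ring

lemma keyI1 (a1 a2 x y : ℝ) (hc : Real.cos ((y-x)/2) ≠ 0) :
    (a1*Real.cos y + a2*Real.sin y) + Real.tan ((y-x)/2)*(a1*Real.sin y - a2*Real.cos y)
    = (a1*Real.cos x + a2*Real.sin x) - Real.tan ((y-x)/2)*(a1*Real.sin x - a2*Real.cos x) := by
  have hy : y = (x+y)/2 + (y-x)/2 := by ring
  have hx : x = (x+y)/2 - (y-x)/2 := by ring
  have hsy : Real.sin y = Real.sin ((x+y)/2) * Real.cos ((y-x)/2) + Real.cos ((x+y)/2) * Real.sin ((y-x)/2) := by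
    nth_rewrite 1 [hy]; exact Real.sin_add _ _
  have hcy : Real.cos y = Real.cos ((x+y)/2) * Real.cos ((y-x)/2) - Real.sin ((x+y)/2) * Real.sin ((y-x)/2) := by
    nth_rewrite 1 [hy]; exact Real.cos_add _ _
  have hsx : Real.sin x = Real.sin ((x+y)/2) * Real.cos ((y-x)/2) - Real.cos ((x+y)/2) * Real.sin ((y-x)/2) := by
    nth_rewrite 1 [hx]; exact Real.sin_sub _ _
  have hcx : Real.cos x = Real.cos ((x+y)/2) * Real.cos ((y-x)/2) + Real.sin ((x+y)/2) * Real.sin ((y-x)/2) := by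
    nth_rewrite 1 [hx]; exact Real.cos_sub _ _
  rw [Real.tan_eq_sin_div_cos, hsy, hcy, hsx, hcx]
  field_simp
  ring

lemma keyI2 (a1 a2 x y : ℝ) (hc : Real.cos ((y-x)/2) ≠ 0) :
    ((a1*Real.sin y - a2*Real.cos y) - (a1*Real.sin x - a2*Real.cos x)) * (1 + Real.tan ((y-x)/2)^2)
    = 2*Real.tan ((y-x)/2)*((a1*Real.cos y + a2*Real.sin y) + Real.tan ((y-x)/2)*(a1*Real.sin y - a2*Real.cos y)) := by
  have hy : y = (x+y)/2 + (y-x)/2 := by ring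
  have hx : x = (x+y)/2 - (y-x)/2 := by ring
  have hsy : Real.sin y = Real.sin ((x+y)/2) * Real.cos ((y-x)/2) + Real.cos ((x+y)/2) * Real.sin ((y-x)/2) := by
    nth_rewrite 1 [hy]; exact Real.sin_add _ _
  have hcy : Real.cos y = Real.cos ((x+y)/2) * Real.cos ((y-x)/2) - Real.sin ((x+y)/2) * Real.sin ((y-x)/2) := by
    nth_rewrite 1 [hy]; exact Real.cos_add _ _
  have hsx : Real.sin x = Real.sin ((x+y)/2) * Real.cos ((y-x)/2) - Real.cos ((x+y)/2) * Real.sin ((y-x)/2) := by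
    nth_rewrite 1 [hx]; exact Real.sin_sub _ _
  have hcx : Real.cos x = Real.cos ((x+y)/2) * Real.cos ((y-x)/2) + Real.sin ((x+y)/2) * Real.sin ((y-x)/2) := by
    nth_rewrite 1 [hx]; exact Real.cos_sub _ _
  have hp := Real.sin_sq_add_cos_sq ((y-x)/2)
  rw [Real.tan_eq_sin_div_cos, hsy, hcy, hsx, hcx]
  field_simp
  ring

/-- The Euler–Lagrange equation of the discrete bending energy implies the
discrete elastica curvature recurrence `κₙ₊₁ + κₙ₋₁ = ακₙ/(1 + (h²/4)κₙ²)`. -/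
theorem discrete_elastica_recurrence_from_EL (h : ℝ) (hh : 0 < h) (Θ : ℤ → ℝ)
    (T : ℤ → ℝ × ℝ) (hT : ∀ n : ℤ, T n = (Real.cos (Θ n), Real.sin (Θ n)))
    (κ : ℤ → ℝ) (hκ : ∀ n : ℤ, κ n = 2 / h * Real.tan ((Θ n - Θ (n - 1)) / 2))
    (hcos : ∀ n : ℤ, Real.cos ((Θ n - Θ (n - 1)) / 2) ≠ 0)
    (hden : ∀ n : ℤ,
      1 + ((T (n - 1)).1 * (T n).1 + (T (n - 1)).2 * (T n).2) ≠ 0)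
    (a : ℝ × ℝ) (c : ℤ → ℝ)
    (hEL : ∀ n : ℤ,
      (2 / h / (1 + ((T (n - 1)).1 * (T n).1 + (T (n - 1)).2 * (T n).2))) • T (n - 1)
      + (2 / h / (1 + ((T n).1 * (T (n + 1)).1 + (T n).2 * (T (n + 1)).2))) • T (n + 1)
      + (2 * c n) • T n + h • a = 0) :
    ∃ α : ℝ, ∀ n : ℤ,
      (κ (n + 1) + κ (n - 1)) * (1 + h ^ 2 / 4 * (κ n) ^ 2) = α * κ n := by
  have hh' : h ≠ 0 := ne_of_gt hh
  -- normal component of EL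
  have key1 : ∀ n : ℤ, Real.tan ((Θ (n+1) - Θ n)/2) - Real.tan ((Θ n - Θ (n-1))/2)
      = h^2/2 * (a.1 * Real.sin (Θ n) - a.2 * Real.cos (Θ n)) := by
    intro n
    have e := hEL n
    simp only [hT] at e
    have hc2 : Real.cos ((Θ (n+1) - Θ n)/2) ≠ 0 := by
      have := hcos (n+1); rwa [show n+1-1 = n by ring] at this
    have e1 := congrArg Prod.fst e
    have e2 := congrArg Prod.snd e
    simp only [Prod.fst_add, Prod.snd_add, Prod.smul_fst, Prod.smul_snd, smul_eq_mul,
      Prod.fst_zero, Prod.snd_zero] at e1 e2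
    refine EL_normal h a.1 a.2 (c n) (Θ (n-1)) (Θ n) (Θ (n+1)) hh' (hcos n) hc2 ?_ ?_
    · linear_combination e1
    · linear_combination e2
  have key2 : ∀ n : ℤ,
      (a.1*Real.cos (Θ (n+1)) + a.2*Real.sin (Θ (n+1)))
        + Real.tan ((Θ (n+1) - Θ n)/2)*(a.1*Real.sin (Θ (n+1)) - a.2*Real.cos (Θ (n+1)))
      = (a.1*Real.cos (Θ n) + a.2*Real.sin (Θ n))
        - Real.tan ((Θ (n+1) - Θ n)/2)*(a.1*Real.sin (Θ n) - a.2*Real.cos (Θ n)) := by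
    intro n
    have hc2 : Real.cos ((Θ (n+1) - Θ n)/2) ≠ 0 := by
      have := hcos (n+1); rwa [show n+1-1 = n by ring] at this
    exact keyI1 a.1 a.2 (Θ n) (Θ (n+1)) hc2
  set G : ℤ → ℝ := fun n => 2*(1 + (Real.tan ((Θ n - Θ (n-1))/2))^2)
      + h^2*((a.1*Real.cos (Θ n) + a.2*Real.sin (Θ n))
        + Real.tan ((Θ n - Θ (n-1))/2)*(a.1*Real.sin (Θ n) - a.2*Real.cos (Θ n))) with hG
  have key3 : ∀ n : ℤ, G (n+1) = G n := by
    intro n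
    simp only [hG]
    rw [show n+1-1 = n by ring]
    linear_combination h^2 * key2 n
      + (2*(Real.tan ((Θ (n+1) - Θ n)/2) + Real.tan ((Θ n - Θ (n-1))/2))) * key1 n
  have hGconst : ∀ n : ℤ, G n = G 0 := by
    intro n
    induction n using Int.induction_on with
    | zero => rfl
    | succ k ih => rw [key3 k, ih]
    | pred k ih =>
        have h2 := key3 (-(k:ℤ)-1)
        rw [show -(k:ℤ)-1+1 = -(k:ℤ) by ring] at h2
        rw [← h2]; exact ih
  refine ⟨G 0, fun n => ?_⟩
  simp only [hG]
  have e_a := key1 n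
  have e_b := key1 (n-1)
  rw [show n-1+1 = n by ring] at e_b
  have key4 := keyI2 a.1 a.2 (Θ (n-1)) (Θ n) (hcos n)
  have hGn : G n = G 0 := hGconst n
  rw [hG] at hGn
  simp only at hGn
  rw [show (0:ℤ)-1 = (-1:ℤ) by ring] at hGn ⊢
  rw [hκ n, hκ (n+1), hκ (n-1)]
  rw [show n+1-1 = n by ring]
  linear_combination (norm := skip) (2/h*(1 + Real.tan ((Θ n - Θ (n-1))/2)^2)) * e_a
    - (2/h*(1 + Real.tan ((Θ n - Θ (n-1))/2)^2)) * e_b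
    + h * key4
    + (2/h*Real.tan ((Θ n - Θ (n-1))/2)) * hGn
  field_simp
  ring
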